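/- Let X be a topological space that is the union of finitely many compact connected linearly ordered subspaces. Let U be an orderly open neighborhood of p whose boundary is contained in an open dense subset D of X. Then there exists an orderly open neighborhood V of p with closure(V) contained in U and U \ V contained in D. -/

import Mathlib

open Set Topology

universe u

/-- A topological space is a LOTS if it is homeomorphic to a linear order with the order topology. -/
def IsLOTS (Y : Type u) [TopologicalSpace Y] : Prop :=
  ∃ (L : Type u) (lo : LinearOrder L) (ts : TopologicalSpace L),
    @OrderTopology L ts lo.toPartialOrder.toPreorder ∧ Nonempty (Y ≃ₜ L)

/-- The set of locally ordered points of `X`. -/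
def LO (X : Type u) [TopologicalSpace X] : Set X :=
  {x | ∃ U : Set X, IsOpen U ∧ x ∈ U ∧ IsLOTS ↥U}

/-- Orderly open sets. -/
def Orderly {X : Type u} [TopologicalSpace X] (U : Set X) : Prop :=
  IsOpen U ∧ U = interior (closure U) ∧ IsConnected U ∧
    (closure U \ U).Finite ∧ closure U \ U ⊆ LO X

/-- Topology of pointwise convergence on the homeomorphism group. -/
instance homPt (X : Type u) [TopologicalSpace X] : TopologicalSpace (X ≃ₜ X) :=
  TopologicalSpace.induced (fun f => (f : X → X)) Pi.topologicalSpace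


section OrderLemmas
variable {β : Type*} [LinearOrder β] [TopologicalSpace β] [OrderTopology β]

theorem conn_dense [PreconnectedSpace β] {a b : β} (hab : a < b) : ∃ c, a < c ∧ c < b := by
  by_contra h
  push_neg at h
  rcases isPreconnected_univ (α := β) (Iio b) (Ioi a) isOpen_Iio isOpen_Ioi
      (fun x _ => by
        rcases le_or_gt x a with hxa | hxa
        · exact Or.inl (hxa.trans_lt hab)
        · exact Or.inr hxa)
      ⟨a, trivial, hab⟩ ⟨b, trivial, hab⟩ with ⟨x, _, hx1, hx2⟩
  exact absurd hx1 (not_lt.2 (h x hx2))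

theorem conn_exists_isLUB [PreconnectedSpace β] {S : Set β} (hne : S.Nonempty)
    (hbdd : BddAbove S) : ∃ x, IsLUB S x := by
  by_contra h
  push_neg at h
  have hnomax : ∀ s ∈ S, ∃ s' ∈ S, s < s' := by
    intro s hs
    by_contra h'
    push_neg at h'
    exact h s ⟨fun y hy => h' y hy, fun b hb => hb hs⟩
  have hnolb : ∀ b ∈ upperBounds S, ∃ b' ∈ upperBounds S, b' < b := by
    intro b hb
    by_contra h'
    push_neg at h'
    exact h b ⟨hb, fun c hc => h' c hc⟩
  rcases isPreconnected_univ (α := β) (⋃ s ∈ S, Iio s) (⋃ b ∈ upperBounds S, Ioi b)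
      (isOpen_biUnion fun _ _ => isOpen_Iio) (isOpen_biUnion fun _ _ => isOpen_Ioi)
      (fun x _ => by
        by_cases hx : x ∈ upperBounds S
        · rcases hnolb x hx with ⟨b', hb', hb'x⟩
          exact Or.inr (mem_biUnion hb' hb'x)
        · rcases not_forall.1 hx with ⟨s, hs⟩
          rcases _root_.not_imp.1 hs with ⟨hsS, hsx⟩
          exact Or.inl (mem_biUnion hsS (not_le.1 hsx)))
      (by
        rcases hne with ⟨s, hs⟩
        rcases hnomax s hs with ⟨s', hs', hss'⟩
        exact ⟨s, trivial, mem_biUnion hs' hss'⟩)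
      (by
        rcases hbdd with ⟨b, hb⟩
        rcases hnolb b hb with ⟨b', hb', hb'b⟩
        exact ⟨b, trivial, mem_biUnion hb' hb'b⟩) with ⟨x, _, hx1, hx2⟩
  rcases mem_iUnion₂.1 hx1 with ⟨s, hs, hxs⟩
  rcases mem_iUnion₂.1 hx2 with ⟨b, hb, hbx⟩
  exact absurd (hxs.trans_le (hb hs)) (not_lt.2 hbx.le)

open Classical in
@[reducible] noncomputable def connCCLO (β : Type*) [LinearOrder β] [TopologicalSpace β] [OrderTopology β]
    [PreconnectedSpace β] [Nonempty β] : ConditionallyCompleteLinearOrder β :=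
  letI d : β := if h2 : ∃ x, IsLUB (univ : Set β) x then h2.choose else Classical.arbitrary β
  letI sup : SupSet β := ⟨fun S => if h : S.Nonempty ∧ ∃ x, IsLUB S x then h.2.choose else d⟩
  letI inf : InfSet β := ⟨fun S => sSup (lowerBounds S)⟩
  have key : ∀ S : Set β, S.Nonempty → BddAbove S → IsLUB S (sSup S) := by
    intro S hne hbdd
    have h : S.Nonempty ∧ ∃ x, IsLUB S x := ⟨hne, conn_exists_isLUB hne hbdd⟩
    show IsLUB S (if h' : S.Nonempty ∧ ∃ x, IsLUB S x then h'.2.choose else d)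
    rw [dif_pos h]
    exact h.2.choose_spec
  have hSup_empty : sSup (∅ : Set β) = d := by
    show (if h' : (∅ : Set β).Nonempty ∧ ∃ x, IsLUB (∅ : Set β) x then h'.2.choose else d) = d
    rw [dif_neg]
    rintro ⟨⟨x, hx⟩, -⟩
    exact absurd hx (Set.notMem_empty x)
  have hSup_univ : sSup (univ : Set β) = d := by
    show (if h' : (univ : Set β).Nonempty ∧ ∃ x, IsLUB (univ : Set β) x
        then h'.2.choose else d) = d
    by_cases hu : (univ : Set β).Nonempty ∧ ∃ x, IsLUB (univ : Set β) x
    · rw [dif_pos hu]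
      show _ = (if h2 : ∃ x, IsLUB (univ : Set β) x then h2.choose else Classical.arbitrary β)
      rw [dif_pos hu.2]
    · rw [dif_neg hu]
  { (inferInstance : Lattice β), (inferInstance : LinearOrder β), sup, inf with
    isLUB_csSup := fun S hne hbdd => key S hne hbdd
    isGLB_csInf := fun S hne hbdd =>
      isLUB_lowerBounds.mp (key (lowerBounds S) hbdd hne.bddAbove_lowerBounds)
    csSup_of_not_bddAbove := by
      intro S hS
      have h1 : sSup S = d := by
        show (if h' : S.Nonempty ∧ ∃ x, IsLUB S x then h'.2.choose else d) = d
        rw [dif_neg]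
        rintro ⟨hne, x, hx⟩
        exact hS ⟨x, hx.1⟩
      rw [h1, hSup_empty]
    csInf_of_not_bddBelow := by
      intro S hS
      show sSup (lowerBounds S) = sSup (lowerBounds (∅ : Set β))
      have h1 : lowerBounds S = ∅ := by
        by_contra h'
        exact hS (nonempty_iff_ne_empty.2 h')
      rw [h1, lowerBounds_empty, hSup_empty, hSup_univ] }


theorem conn_isCompact_Icc [PreconnectedSpace β] (a b : β) : IsCompact (Icc a b) := by
  haveI : Nonempty β := ⟨a⟩
  letI C := connCCLO β
  haveI hot : OrderTopology β := ⟨‹OrderTopology β›.topology_eq_generate_intervals⟩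
  exact isCompact_Icc

theorem conn_ordConnected_isPreconnected [PreconnectedSpace β] {s : Set β}
    (hs : s.OrdConnected) : IsPreconnected s := by
  cases isEmpty_or_nonempty β
  · rw [eq_empty_of_isEmpty s]
    exact isPreconnected_empty
  letI C := connCCLO β
  haveI hot : OrderTopology β := ⟨‹OrderTopology β›.topology_eq_generate_intervals⟩
  haveI hd : DenselyOrdered β := ⟨fun a b h => conn_dense (β := β) h⟩
  exact Set.OrdConnected.isPreconnected hs

end OrderLemmas


theorem Homeomorph.locallyConnectedSpace' {γ δ : Type*} [TopologicalSpace γ] [TopologicalSpace δ]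
    (e : γ ≃ₜ δ) [LocallyConnectedSpace δ] : LocallyConnectedSpace γ := by
  rw [locallyConnectedSpace_iff_connected_subsets]
  intro x s hs
  obtain ⟨V, hV, hVc, hVs⟩ := locallyConnectedSpace_iff_connected_subsets.1 ‹_› (e x) (e '' s)
    (by rw [← e.map_nhds_eq]; exact Filter.image_mem_map hs)
  refine ⟨e.symm '' V, ?_, hVc.image _ e.symm.continuous.continuousOn, ?_⟩
  · rw [← e.symm_map_nhds_eq]
    exact Filter.image_mem_map hV
  · rintro y ⟨z, hz, rfl⟩
    obtain ⟨w, hw, rfl⟩ := hVs hz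
    simpa using hw

section Space
variable {X : Type u} [TopologicalSpace X] {n : ℕ} {L : Fin n → Set X}

theorem cover_closure (hclosed : ∀ i, IsClosed (L i)) (hcover : ⋃ i, L i = Set.univ)
    (A : Set X) : closure A = ⋃ i, closure (A ∩ L i) := by
  have h1 : A = ⋃ i, A ∩ L i := by
    rw [← inter_iUnion, hcover, inter_univ]
  conv_lhs => rw [h1]
  exact closure_iUnion_of_finite _

theorem cover_compact_isClosed (hclosed : ∀ i, IsClosed (L i))
    (hlots : ∀ i, IsLOTS ↥(L i)) (hcover : ⋃ i, L i = Set.univ)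
    {K : Set X} (hK : IsCompact K) : IsClosed K := by
  have hT2 : ∀ i, T2Space ↥(L i) := by
    intro i
    obtain ⟨β, lo, ts, hot, ⟨e⟩⟩ := hlots i
    letI := lo; letI := ts; haveI := hot
    exact e.isEmbedding.t2Space
  have h2 : ∀ i, IsClosed (K ∩ L i) := by
    intro i
    haveI := hT2 i
    have hKL : IsCompact (K ∩ L i) := hK.inter_right (hclosed i)
    have him : ((↑) : ↥(L i) → X) '' ((↑) ⁻¹' K) = K ∩ L i := by
      rw [Subtype.image_preimage_coe, inter_comm]
    have hK'cpt : IsCompact (((↑) : ↥(L i) → X) ⁻¹' K) := by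
      apply (Topology.IsEmbedding.subtypeVal (p := (· ∈ L i))).isCompact_iff.2
      rw [him]; exact hKL
    have := ((hclosed i).isClosedEmbedding_subtypeVal.isClosedMap) _ hK'cpt.isClosed
    rwa [him] at this
  apply isClosed_of_closure_subset
  rw [cover_closure hclosed hcover]
  apply iUnion_subset
  intro i
  rw [(h2 i).closure_eq]
  exact fun y hy => hy.1

theorem cover_t1 (hclosed : ∀ i, IsClosed (L i)) (hlots : ∀ i, IsLOTS ↥(L i))
    (hcover : ⋃ i, L i = Set.univ) : T1Space X :=
  ⟨fun x => cover_compact_isClosed hclosed hlots hcover isCompact_singleton⟩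

theorem cover_locallyConnected (hclosed : ∀ i, IsClosed (L i))
    (hconn : ∀ i, IsConnected (L i)) (hlots : ∀ i, IsLOTS ↥(L i))
    (hcover : ⋃ i, L i = Set.univ) : LocallyConnectedSpace X := by
  classical
  have hloc : ∀ i, LocallyConnectedSpace ↥(L i) := by
    intro i
    obtain ⟨β, lo, ts, hot, ⟨e⟩⟩ := hlots i
    letI := lo; letI := ts; haveI := hot
    haveI : PreconnectedSpace β := by
      refine preconnectedSpace_iff_univ.2 ?_
      have h1 : (univ : Set β) = e '' univ := by
        rw [image_univ, Homeomorph.range_coe]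
      rw [h1]
      haveI : PreconnectedSpace ↥(L i) :=
        Subtype.preconnectedSpace (hconn i).isPreconnected
      exact isPreconnected_univ.image _ e.continuous.continuousOn
    haveI : LocallyConnectedSpace β := by
      rw [locallyConnectedSpace_iff_connected_subsets]
      intro x s hs
      obtain ⟨b, c, hx, hmem, hsub⟩ := exists_Icc_mem_subset_of_mem_nhds hs
      exact ⟨Icc b c, hmem, conn_ordConnected_isPreconnected ordConnected_Icc, hsub⟩
    exact e.locallyConnectedSpace'
  rw [locallyConnectedSpace_iff_connected_subsets]
  intro x O hO
  have hxuniv : x ∈ ⋃ i, L i := by rw [hcover]; trivial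
  -- for each i with x ∈ L i, choose a preconnected neighborhood
  have key : ∀ i, x ∈ L i → ∃ (Ci : Set X) (Wi : Set X), IsPreconnected Ci ∧ Ci ⊆ O ∧
      x ∈ Ci ∧ IsOpen Wi ∧ x ∈ Wi ∧ Wi ∩ L i ⊆ Ci := by
    intro i hi
    haveI := hloc i
    have hO' : (Subtype.val ⁻¹' O : Set (L i)) ∈ 𝓝 (⟨x, hi⟩ : L i) :=
      continuous_subtype_val.continuousAt.preimage_mem_nhds hO
    obtain ⟨V, hV, hVc, hVs⟩ :=
      locallyConnectedSpace_iff_connected_subsets.1 inferInstance (⟨x, hi⟩ : L i) _ hO'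
    obtain ⟨t, ht, htV⟩ := (mem_nhds_subtype _ _ _).1 hV
    refine ⟨(↑) '' V, interior t, hVc.image _ continuous_subtype_val.continuousOn, ?_, ?_, isOpen_interior, ?_, ?_⟩
    · rintro y ⟨z, hz, rfl⟩; exact hVs hz
    · exact ⟨⟨x, hi⟩, mem_of_mem_nhds hV, rfl⟩
    · exact mem_interior_iff_mem_nhds.2 ht
    · rintro y ⟨hy1, hy2⟩
      exact ⟨⟨y, hy2⟩, htV (show y ∈ t from interior_subset hy1), rfl⟩
  choose! C W hCpre hCO hxC hWopen hxW hWC using key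
  set J : Set (Fin n) := {i | x ∈ L i} with hJ
  have hJne : J.Nonempty := by
    obtain ⟨i, hi⟩ := mem_iUnion.1 hxuniv
    exact ⟨i, hi⟩
  refine ⟨⋃ i ∈ J, C i, ?_, ?_, ?_⟩
  · -- neighborhood
    have hWopen' : IsOpen ((⋂ i ∈ J, W i) ∩ (⋂ i ∈ Jᶜ, (L i)ᶜ)) := by
      apply IsOpen.inter
      · exact (Set.toFinite J).isOpen_biInter fun i hi => hWopen i hi
      · exact (Set.toFinite Jᶜ).isOpen_biInter
          fun i hi => (hclosed i).isOpen_compl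
    refine Filter.mem_of_superset (hWopen'.mem_nhds ⟨?_, ?_⟩) ?_
    · exact mem_biInter fun i hi => hxW i hi
    · exact mem_biInter fun i (hi : x ∉ L i) => hi
    · rintro y ⟨hy1, hy2⟩
      have : y ∈ ⋃ i, L i := by rw [hcover]; trivial
      obtain ⟨i, hi⟩ := mem_iUnion.1 this
      have hiJ : i ∈ J := by
        by_contra hiJ
        exact (mem_iInter₂.1 hy2 i hiJ) hi
      exact mem_biUnion hiJ (hWC i hiJ ⟨mem_iInter₂.1 hy1 i hiJ, hi⟩)
  · -- preconnected
    rw [← sUnion_image]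
    apply isPreconnected_sUnion x
    · rintro s ⟨i, hi, rfl⟩; exact hxC i hi
    · rintro s ⟨i, hi, rfl⟩; exact hCpre i hi
  · exact iUnion₂_subset fun i hi => hCO i hi

end Space


theorem IsPreconnected.ordConnected' {β : Type*} [LinearOrder β] [TopologicalSpace β]
    [OrderTopology β] {s : Set β} (h : IsPreconnected s) : s.OrdConnected := by
  constructor
  intro a ha b hb c hc
  by_contra hcs
  rcases h (Iio c) (Ioi c) isOpen_Iio isOpen_Ioi
      (fun y hy => by
        rcases lt_trichotomy y c with h1 | rfl | h1
        · exact Or.inl h1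
        · exact absurd hy hcs
        · exact Or.inr h1)
      ⟨a, ha, lt_of_le_of_ne hc.1 (fun h' => hcs (h' ▸ ha))⟩
      ⟨b, hb, lt_of_le_of_ne hc.2 (fun h' => hcs (h' ▸ hb))⟩ with ⟨y, _, hy1, hy2⟩
  exact absurd (hy1.trans hy2) (lt_irrefl y)

section Cut
variable {X : Type u} [TopologicalSpace X] {n : ℕ} {L : Fin n → Set X}

/-- Attachment data for a boundary piece. -/
def Attach (U C P : Set X) : Prop :=
  ∀ S : Set X, IsClosed S → Disjoint S C → P.Nonempty →
    ∃ T O : Set X, IsOpen O ∧ P ⊆ O ∧ O ⊆ C ∪ T ∧ T.Nonempty ∧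
      Disjoint T C ∧ closure T ⊆ U ∧ closure T ∩ C ⊆ P ∧ Disjoint (closure T) S ∧
      IsPreconnected T ∧ IsPreconnected (P ∪ T)

/-- A good cutting set at a boundary point. -/
def GoodCut (U : Set X) (x : X) (C : Set X) : Prop :=
  IsClosed C ∧ x ∈ interior C ∧ (C \ interior C).Finite ∧ C \ interior C ⊆ LO X ∧
    C \ interior C ⊆ closure (interior C) ∧
    ∃ P₁ P₂ : Set X,
      C ∩ U = P₁ ∪ P₂ ∧ Disjoint (closure P₁) P₂ ∧ Disjoint P₁ (closure P₂) ∧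
      Attach U C P₁ ∧ Attach U C P₂

theorem exists_goodCut (hclosed : ∀ i, IsClosed (L i)) (hconn : ∀ i, IsConnected (L i))
    (hlots : ∀ i, IsLOTS ↥(L i)) (hcover : ⋃ i, L i = Set.univ)
    {U : Set X} (hUopen : IsOpen U)
    {x : X} (hxcl : x ∈ closure U) (hxU : x ∉ U) (hxLO : x ∈ LO X)
    {G : Set X} (hGopen : IsOpen G) (hxG : x ∈ G)
    (hGK : G ∩ (closure U \ U) ⊆ {x}) :
    ∃ C, GoodCut U x C ∧ C ⊆ G := by
  classical
  haveI := cover_locallyConnected hclosed hconn hlots hcover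
  obtain ⟨W, hWopen, hxW, hWlots⟩ := hxLO
  obtain ⟨β, lo, ts, hot, ⟨e⟩⟩ := hWlots
  letI := lo; letI := ts; haveI := hot
  have hWLO : W ⊆ LO X := fun z hz => ⟨W, hWopen, hz, β, lo, ts, hot, ⟨e⟩⟩
  -- connected open neighborhood I of x inside G ∩ W
  obtain ⟨I, hIsub, hIopen, hxI, hIconn⟩ :=
    locallyConnectedSpace_iff_subsets_isOpen_isConnected.1 inferInstance x (G ∩ W)
      ((hGopen.inter hWopen).mem_nhds ⟨hxG, hxW⟩)
  -- the open embedding φ : β → X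
  set φ : β → X := Subtype.val ∘ e.symm with hφdef
  have hφ : IsOpenEmbedding φ := hWopen.isOpenEmbedding_subtypeVal.comp e.symm.isOpenEmbedding
  have hrange : range φ = W := by
    rw [hφdef, range_comp, e.symm.range_coe, image_univ, Subtype.range_coe]
  set Iβ : Set β := φ ⁻¹' I with hIβdef
  have hIβopen : IsOpen Iβ := hIopen.preimage hφ.continuous
  have hφIβ : φ '' Iβ = I := by
    rw [hIβdef, image_preimage_eq_of_subset]
    rw [hrange]
    exact fun z hz => (hIsub hz).2
  have hIβpre : IsPreconnected Iβ := by
    rw [← hφ.isEmbedding.isInducing.isPreconnected_image, hφIβ]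
    exact hIconn.isPreconnected
  have hℓmem : (e ⟨x, hxW⟩ : β) ∈ Iβ := by
    show φ _ ∈ I
    simp only [hφdef, Function.comp_apply, Homeomorph.symm_apply_apply]
    exact hxI
  -- the subtype γ with its order structures
  set γ := ↥Iβ with hγdef
  haveI hIβoc : Set.OrdConnected Iβ := hIβpre.ordConnected'
  haveI : PreconnectedSpace γ := Subtype.preconnectedSpace hIβpre
  haveI : Nonempty γ := ⟨⟨_, hℓmem⟩⟩
  letI : ConditionallyCompleteLinearOrder γ := connCCLO γ
  haveI hotγ : OrderTopology γ :=
    ⟨(orderTopology_of_ordConnected (t := Iβ)).topology_eq_generate_intervals⟩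
  haveI : DenselyOrdered γ := ⟨fun a b h => conn_dense (β := γ) h⟩
  -- the open embedding ψ : γ → X
  set ψ : γ → X := φ ∘ Subtype.val with hψdef
  have hψ : IsOpenEmbedding ψ := hφ.comp hIβopen.isOpenEmbedding_subtypeVal
  have hinj : Function.Injective ψ := hψ.injective
  have hψI : ∀ s : Set γ, ψ '' s ⊆ I := by
    rintro s z ⟨w, _, rfl⟩
    exact w.2
  set lγ : γ := ⟨e ⟨x, hxW⟩, hℓmem⟩ with hlγdef
  have hψl : ψ lγ = x := by
    simp only [hψdef, hlγdef, Function.comp_apply, hφdef, Homeomorph.symm_apply_apply]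
  -- toolkit
  have hccl : ∀ a b : γ, IsClosed (ψ '' Icc a b) := fun a b =>
    cover_compact_isClosed hclosed hlots hcover (isCompact_Icc.image hψ.continuous)
  have hdisj : ∀ A B : Set γ, A ∩ B = ∅ → Disjoint (ψ '' A) (ψ '' B) := by
    intro A B hAB
    rw [Set.disjoint_iff_inter_eq_empty, ← image_inter hinj, hAB, image_empty]
  have hIK : I ∩ (closure U \ U) ⊆ {x} := fun y hy => hGK ⟨(hIsub hy.1).1, hy.2⟩
  have hsideU : ∀ s : Set γ, lγ ∉ s → IsPreconnected s → (ψ '' s ⊆ U ∨ ψ '' s ∩ U = ∅) := by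
    intro s hls hspre
    have hcov : ψ '' s ⊆ U ∪ (closure U)ᶜ := by
      rintro z ⟨w, hw, rfl⟩
      by_cases hz : ψ w ∈ closure U
      · by_cases hz2 : ψ w ∈ U
        · exact Or.inl hz2
        · exfalso
          have hzx : ψ w = x := hIK ⟨hψI s ⟨w, hw, rfl⟩, hz, hz2⟩
          rw [← hψl] at hzx
          exact hls (hinj hzx ▸ hw)
      · exact Or.inr hz
    rcases IsPreconnected.subset_or_subset hUopen (isClosed_closure (s := U)).isOpen_compl
        (disjoint_compl_right.mono_left subset_closure) hcov
        (hspre.image ψ hψ.continuous.continuousOn) with h | h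
    · exact Or.inl h
    · right
      rw [eq_empty_iff_forall_notMem]
      rintro z ⟨hz1, hz2⟩
      exact h hz1 (subset_closure hz2)
  -- left endpoint package
  obtain ⟨bm, Tm, hbm_le, hTmo, hTml, hTmsub, hTmge, hTmbd, hbmpos, hbmneg⟩ :
      ∃ (bm : γ) (Tm : Set γ), bm ≤ lγ ∧ IsOpen Tm ∧ lγ ∈ Tm ∧ Ioi bm ⊆ Tm ∧
        (∀ y ∈ Tm, bm ≤ y) ∧ (∀ y, y ∉ Tm → bm ≤ y → y = bm) ∧
        ((Iio lγ).Nonempty → bm < lγ ∧ (∃ a, a < bm) ∧ bm ∈ closure (Ioo bm lγ)) ∧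
        (¬(Iio lγ).Nonempty → bm = lγ) := by
    by_cases hL : (Iio lγ).Nonempty
    · obtain ⟨a, ha⟩ := hL
      obtain ⟨bm, habm, hbml⟩ := exists_between (α := γ) ha
      refine ⟨bm, Ioi bm, hbml.le, isOpen_Ioi, hbml, le_refl _, fun y hy => le_of_lt hy,
        fun y hy1 hy2 => le_antisymm (not_lt.1 hy1) hy2, fun _ => ⟨hbml, ⟨a, habm⟩, ?_⟩,
        fun h => absurd ⟨a, ha⟩ h⟩
      rw [closure_Ioo hbml.ne]
      exact ⟨le_refl _, hbml.le⟩
    · have hbot : ∀ y : γ, lγ ≤ y := fun y => not_lt.1 fun h => hL ⟨y, h⟩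
      exact ⟨lγ, univ, le_refl _, isOpen_univ, trivial, subset_univ _, fun y _ => hbot y,
        fun y hy _ => absurd trivial hy, fun h => absurd h hL, fun _ => rfl⟩
  -- right endpoint package
  obtain ⟨bp, Tp, hbp_le, hTpo, hTpl, hTpsub, hTpge, hTpbd, hbppos, hbpneg⟩ :
      ∃ (bp : γ) (Tp : Set γ), lγ ≤ bp ∧ IsOpen Tp ∧ lγ ∈ Tp ∧ Iio bp ⊆ Tp ∧
        (∀ y ∈ Tp, y ≤ bp) ∧ (∀ y, y ∉ Tp → y ≤ bp → y = bp) ∧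
        ((Ioi lγ).Nonempty → lγ < bp ∧ (∃ a, bp < a) ∧ bp ∈ closure (Ioo lγ bp)) ∧
        (¬(Ioi lγ).Nonempty → bp = lγ) := by
    by_cases hR : (Ioi lγ).Nonempty
    · obtain ⟨a, ha⟩ := hR
      obtain ⟨bp, hlbp, hbpa⟩ := exists_between (α := γ) ha
      refine ⟨bp, Iio bp, hlbp.le, isOpen_Iio, hlbp, le_refl _, fun y hy => le_of_lt hy,
        fun y hy1 hy2 => le_antisymm hy2 (not_lt.1 hy1), fun _ => ⟨hlbp, ⟨a, hbpa⟩, ?_⟩,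
        fun h => absurd ⟨a, ha⟩ h⟩
      rw [closure_Ioo hlbp.ne]
      exact ⟨hlbp.le, le_refl _⟩
    · have htop : ∀ y : γ, y ≤ lγ := fun y => not_lt.1 fun h => hR ⟨y, h⟩
      exact ⟨lγ, univ, le_refl _, isOpen_univ, trivial, subset_univ _, fun y _ => htop y,
        fun y hy _ => absurd trivial hy, fun h => absurd h hR, fun _ => rfl⟩
  -- the cut
  set C : Set X := ψ '' Icc bm bp with hCdef
  set N : Set X := ψ '' (Tm ∩ Tp) with hNdef
  have hCclosed : IsClosed C := hccl bm bp
  have hTmTp : Tm ∩ Tp ⊆ Icc bm bp := fun y hy => ⟨hTmge y hy.1, hTpge y hy.2⟩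
  have hNopen : IsOpen N := hψ.isOpenMap _ (hTmo.inter hTpo)
  have hNint : N ⊆ interior C := interior_maximal (image_mono hTmTp) hNopen
  have hxN : x ∈ N := ⟨lγ, ⟨hTml, hTpl⟩, hψl⟩
  have hxint : x ∈ interior C := hNint hxN
  have hbd_sub : C \ interior C ⊆ {ψ bm, ψ bp} := by
    rintro z ⟨⟨w, hw, rfl⟩, hz2⟩
    have hwN : w ∉ Tm ∩ Tp := fun hc => hz2 (hNint ⟨w, hc, rfl⟩)
    by_cases h1 : w ∈ Tm
    · have h2 : w ∉ Tp := fun hc => hwN ⟨h1, hc⟩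
      exact mem_insert_iff.2 (Or.inr (mem_singleton_iff.2 (congrArg ψ (hTpbd w h2 hw.2))))
    · exact mem_insert_iff.2 (Or.inl (congrArg ψ (hTmbd w h1 hw.1)))
  have hclN : ∀ z ∈ ({ψ bm, ψ bp} : Set X), z ∈ closure N := by
    rintro z (rfl | rfl)
    · by_cases hL : (Iio lγ).Nonempty
      · obtain ⟨hlt, -, hcl⟩ := hbmpos hL
        have h1 : Ioo bm lγ ⊆ Tm ∩ Tp := fun y hy =>
          ⟨hTmsub hy.1, hTpsub (lt_of_lt_of_le hy.2 hbp_le)⟩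
        have h2 : ψ bm ∈ closure (ψ '' Ioo bm lγ) :=
          image_closure_subset_closure_image hψ.continuous ⟨bm, hcl, rfl⟩
        exact closure_mono (image_mono h1) h2
      · have : bm = lγ := hbmneg hL
        rw [this, hψl]
        exact subset_closure hxN
    · by_cases hR : (Ioi lγ).Nonempty
      · obtain ⟨hlt, -, hcl⟩ := hbppos hR
        have h1 : Ioo lγ bp ⊆ Tm ∩ Tp := fun y hy =>
          ⟨hTmsub (lt_of_le_of_lt hbm_le hy.1), hTpsub hy.2⟩
        have h2 : ψ bp ∈ closure (ψ '' Ioo lγ bp) :=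
          image_closure_subset_closure_image hψ.continuous ⟨bp, hcl, rfl⟩
        exact closure_mono (image_mono h1) h2
      · have : bp = lγ := hbpneg hR
        rw [this, hψl]
        exact subset_closure hxN
  -- attachments
  have attach_left : (Iio lγ).Nonempty → ψ '' (Iio lγ) ⊆ U → Attach U C (ψ '' Ico bm lγ) := by
    intro hL hSLU S hScl hSC _
    obtain ⟨hbml, ⟨a, habm⟩, -⟩ := hbmpos hL
    have hbmS : bm ∉ ψ ⁻¹' S := fun hc =>
      (Set.disjoint_left.1 hSC) hc ⟨bm, ⟨le_refl _, hbm_le.trans hbp_le⟩, rfl⟩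
    have hnhds : (ψ ⁻¹' S)ᶜ ∈ 𝓝 bm :=
      ((hScl.preimage hψ.continuous).isOpen_compl).mem_nhds hbmS
    obtain ⟨u, v, huv, hsub⟩ := (mem_nhds_iff_exists_Ioo_subset' ⟨a, habm⟩ ⟨lγ, hbml⟩).1 hnhds
    obtain ⟨c, hc1, hc2⟩ := exists_between (α := γ) (max_lt huv.1 habm)
    have hcu : u < c := lt_of_le_of_lt (le_max_left _ _) hc1
    have hclT : closure (ψ '' Ioo c bm) ⊆ ψ '' Icc c bm :=
      closure_minimal (image_mono Ioo_subset_Icc_self) (hccl c bm)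
    refine ⟨ψ '' Ioo c bm, ψ '' Ioo c lγ, hψ.isOpenMap _ isOpen_Ioo,
      image_mono (fun y hy => ⟨hc2.trans_le hy.1, hy.2⟩), ?_, ?_, ?_, ?_, ?_, ?_, ?_, ?_⟩
    · rintro z ⟨w, hw, rfl⟩
      rcases le_or_gt bm w with h | h
      · exact Or.inl ⟨w, ⟨h, (le_of_lt hw.2).trans hbp_le⟩, rfl⟩
      · exact Or.inr ⟨w, ⟨hw.1, h⟩, rfl⟩
    · obtain ⟨t, ht⟩ := exists_between (α := γ) hc2
      exact ⟨ψ t, t, ht, rfl⟩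
    · refine hdisj _ _ (eq_empty_iff_forall_notMem.2 ?_)
      rintro y ⟨h1, h2⟩
      exact absurd h2.1 (not_le.2 h1.2)
    · refine hclT.trans ?_
      refine (image_mono (fun y (hy : y ∈ Icc c bm) => ?_)).trans hSLU
      exact lt_of_le_of_lt hy.2 hbml
    · intro z hz
      obtain ⟨w1, hw1, hw1e⟩ := hclT hz.1
      obtain ⟨w2, hw2, hw2e⟩ := hz.2
      have : w1 = w2 := hinj (hw1e.trans hw2e.symm)
      subst this
      refine ⟨w1, ⟨le_antisymm hw1.2 hw2.1 ▸ le_refl bm, ?_⟩, hw1e⟩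
      have : w1 = bm := le_antisymm hw1.2 hw2.1
      rw [this]; exact hbml
    · rw [Set.disjoint_left]
      rintro z hz hzS
      obtain ⟨w, hw, rfl⟩ := hclT hz
      have : w ∈ Ioo u v := ⟨lt_of_lt_of_le hcu hw.1, lt_of_le_of_lt hw.2 huv.2⟩
      exact hsub this hzS
    · exact isPreconnected_Ioo.image ψ hψ.continuous.continuousOn
    · rw [← image_union]
      have heq : Ico bm lγ ∪ Ioo c bm = Ioo c lγ := by
        ext y
        constructor
        · rintro (hy | hy)
          · exact ⟨hc2.trans_le hy.1, hy.2⟩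
          · exact ⟨hy.1, hy.2.trans hbml⟩
        · intro hy
          rcases le_or_gt bm y with h | h
          · exact Or.inl ⟨h, hy.2⟩
          · exact Or.inr ⟨hy.1, h⟩
      rw [heq]
      exact isPreconnected_Ioo.image ψ hψ.continuous.continuousOn
  have attach_right : (Ioi lγ).Nonempty → ψ '' (Ioi lγ) ⊆ U → Attach U C (ψ '' Ioc lγ bp) := by
    intro hR hSRU S hScl hSC _
    obtain ⟨hbpl, ⟨a, habp⟩, -⟩ := hbppos hR
    have hbpS : bp ∉ ψ ⁻¹' S := fun hc =>
      (Set.disjoint_left.1 hSC) hc ⟨bp, ⟨hbm_le.trans hbp_le, le_refl _⟩, rfl⟩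
    have hnhds : (ψ ⁻¹' S)ᶜ ∈ 𝓝 bp :=
      ((hScl.preimage hψ.continuous).isOpen_compl).mem_nhds hbpS
    obtain ⟨u, v, huv, hsub⟩ := (mem_nhds_iff_exists_Ioo_subset' ⟨lγ, hbpl⟩ ⟨a, habp⟩).1 hnhds
    obtain ⟨c, hc1, hc2⟩ := exists_between (α := γ) (lt_min huv.2 habp)
    have hcu : c < v := lt_of_lt_of_le hc2 (min_le_left _ _)
    have hclT : closure (ψ '' Ioo bp c) ⊆ ψ '' Icc bp c :=
      closure_minimal (image_mono Ioo_subset_Icc_self) (hccl bp c)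
    refine ⟨ψ '' Ioo bp c, ψ '' Ioo lγ c, hψ.isOpenMap _ isOpen_Ioo,
      image_mono (fun y hy => ⟨hy.1, lt_of_le_of_lt hy.2 hc1⟩), ?_, ?_, ?_, ?_, ?_, ?_, ?_, ?_⟩
    · rintro z ⟨w, hw, rfl⟩
      rcases le_or_gt w bp with h | h
      · exact Or.inl ⟨w, ⟨hbm_le.trans (le_of_lt hw.1), h⟩, rfl⟩
      · exact Or.inr ⟨w, ⟨h, hw.2⟩, rfl⟩
    · obtain ⟨t, ht⟩ := exists_between (α := γ) hc1
      exact ⟨ψ t, t, ht, rfl⟩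
    · refine hdisj _ _ (eq_empty_iff_forall_notMem.2 ?_)
      rintro y ⟨h1, h2⟩
      exact absurd h2.2 (not_le.2 h1.1)
    · refine hclT.trans ?_
      refine (image_mono (fun y (hy : y ∈ Icc bp c) => ?_)).trans hSRU
      exact lt_of_lt_of_le hbpl hy.1
    · intro z hz
      obtain ⟨w1, hw1, hw1e⟩ := hclT hz.1
      obtain ⟨w2, hw2, hw2e⟩ := hz.2
      have : w1 = w2 := hinj (hw1e.trans hw2e.symm)
      subst this
      have hweq : w1 = bp := le_antisymm hw2.2 hw1.1
      refine ⟨w1, ⟨?_, hweq ▸ le_refl bp⟩, hw1e⟩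
      rw [hweq]; exact hbpl
    · rw [Set.disjoint_left]
      rintro z hz hzS
      obtain ⟨w, hw, rfl⟩ := hclT hz
      have : w ∈ Ioo u v := ⟨lt_of_lt_of_le huv.1 hw.1, lt_of_le_of_lt hw.2 hcu⟩
      exact hsub this hzS
    · exact isPreconnected_Ioo.image ψ hψ.continuous.continuousOn
    · rw [← image_union]
      have heq : Ioc lγ bp ∪ Ioo bp c = Ioo lγ c := by
        ext y
        constructor
        · rintro (hy | hy)
          · exact ⟨hy.1, lt_of_le_of_lt hy.2 hc1⟩
          · exact ⟨hbpl.trans hy.1, hy.2⟩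
        · intro hy
          rcases le_or_gt y bp with h | h
          · exact Or.inl ⟨hy.1, h⟩
          · exact Or.inr ⟨h, hy.2⟩
      rw [heq]
      exact isPreconnected_Ioo.image ψ hψ.continuous.continuousOn
  -- the pieces
  obtain ⟨P1, hP1eq, hP1sub, hP1att⟩ :
      ∃ P1, ψ '' Ico bm lγ ∩ U = P1 ∧ P1 ⊆ ψ '' Ico bm lγ ∧ Attach U C P1 := by
    by_cases hL : (Iio lγ).Nonempty
    · rcases hsideU (Iio lγ) (fun h => lt_irrefl _ h) isPreconnected_Iio with hSLU | hSLU
      · exact ⟨ψ '' Ico bm lγ,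
          inter_eq_left.2 ((image_mono (fun y hy => hy.2)).trans hSLU),
          subset_rfl, attach_left hL hSLU⟩
      · refine ⟨∅, ?_, empty_subset _, fun S _ _ hne => absurd hne Set.not_nonempty_empty⟩
        apply eq_empty_of_subset_empty
        rw [← hSLU]
        exact inter_subset_inter_left U (image_mono (fun y hy => hy.2))
    · have hIcoe : Ico bm lγ = ∅ := by rw [hbmneg hL]; exact Ico_self lγ
      exact ⟨∅, by rw [hIcoe, image_empty, empty_inter], empty_subset _,
        fun S _ _ hne => absurd hne Set.not_nonempty_empty⟩
  obtain ⟨P2, hP2eq, hP2sub, hP2att⟩ :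
      ∃ P2, ψ '' Ioc lγ bp ∩ U = P2 ∧ P2 ⊆ ψ '' Ioc lγ bp ∧ Attach U C P2 := by
    by_cases hR : (Ioi lγ).Nonempty
    · rcases hsideU (Ioi lγ) (fun h => lt_irrefl _ h) isPreconnected_Ioi with hSRU | hSRU
      · exact ⟨ψ '' Ioc lγ bp,
          inter_eq_left.2 ((image_mono (fun y hy => hy.1)).trans hSRU),
          subset_rfl, attach_right hR hSRU⟩
      · refine ⟨∅, ?_, empty_subset _, fun S _ _ hne => absurd hne Set.not_nonempty_empty⟩
        apply eq_empty_of_subset_empty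
        rw [← hSRU]
        exact inter_subset_inter_left U (image_mono (fun y hy => hy.1))
    · have hIoce : Ioc lγ bp = ∅ := by rw [hbpneg hR]; exact Ioc_self lγ
      exact ⟨∅, by rw [hIoce, image_empty, empty_inter], empty_subset _,
        fun S _ _ hne => absurd hne Set.not_nonempty_empty⟩
  -- assemble
  have hdecomp : Icc bm bp = Ico bm lγ ∪ {lγ} ∪ Ioc lγ bp := by
    ext y
    constructor
    · intro hy
      rcases lt_trichotomy y lγ with h | h | h
      · exact Or.inl (Or.inl ⟨hy.1, h⟩)
      · exact Or.inl (Or.inr h)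
      · exact Or.inr ⟨h, hy.2⟩
    · rintro ((hy | hy) | hy)
      · exact ⟨hy.1, (le_of_lt hy.2).trans hbp_le⟩
      · rw [hy]; exact ⟨hbm_le, hbp_le⟩
      · exact ⟨hbm_le.trans (le_of_lt hy.1), hy.2⟩
  have hCU : C ∩ U = P1 ∪ P2 := by
    rw [hCdef, hdecomp, image_union, image_union, image_singleton, hψl,
      union_inter_distrib_right, union_inter_distrib_right, hP1eq, hP2eq,
      singleton_inter_eq_empty.2 hxU, union_empty]
  have hclP1 : closure P1 ⊆ ψ '' Icc bm lγ :=
    closure_minimal (hP1sub.trans (image_mono Ico_subset_Icc_self)) (hccl bm lγ)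
  have hclP2 : closure P2 ⊆ ψ '' Icc lγ bp :=
    closure_minimal (hP2sub.trans (image_mono Ioc_subset_Icc_self)) (hccl lγ bp)
  refine ⟨C, ⟨hCclosed, hxint, ?_, ?_, ?_, P1, P2, hCU, ?_, ?_, hP1att, hP2att⟩, ?_⟩
  · exact (Set.toFinite ({ψ bm, ψ bp} : Set X)).subset hbd_sub
  · intro z hz
    rcases hbd_sub hz with h | h
    · rw [h]; exact hWLO (hIsub (hψI {bm} ⟨bm, rfl, rfl⟩)).2
    · rw [h]; exact hWLO (hIsub (hψI {bp} ⟨bp, rfl, rfl⟩)).2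
  · exact fun z hz => closure_mono hNint (hclN z (hbd_sub hz))
  · refine Disjoint.mono hclP1 hP2sub (hdisj _ _ (eq_empty_iff_forall_notMem.2 ?_))
    rintro y ⟨h1, h2⟩
    exact absurd h2.1 (not_lt.2 h1.2)
  · refine Disjoint.mono hP1sub hclP2 (hdisj _ _ (eq_empty_iff_forall_notMem.2 ?_))
    rintro y ⟨h1, h2⟩
    exact absurd h1.2 (not_lt.2 h2.1)
  · intro z hz
    exact (hIsub (hψI (Icc bm bp) hz)).1

end Cut

section Assemble
variable {X : Type u} [TopologicalSpace X] {n : ℕ} {L : Fin n → Set X}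

theorem exists_cut_family (hclosed : ∀ i, IsClosed (L i)) (hconn : ∀ i, IsConnected (L i))
    (hlots : ∀ i, IsLOTS ↥(L i)) (hcover : ⋃ i, L i = Set.univ)
    {U D : Set X} (hUopen : IsOpen U) (hKfin : (closure U \ U).Finite)
    (hKLO : closure U \ U ⊆ LO X) (hDopen : IsOpen D) (hbd : closure U \ U ⊆ D)
    {p : X} (hpU : p ∈ U) :
    ∃ f : X → Set X,
      (∀ x ∈ closure U \ U, GoodCut U x (f x) ∧ f x ⊆ D ∧ p ∉ f x ∧
        f x ∩ (closure U \ U) ⊆ {x}) ∧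
      (∀ x ∈ closure U \ U, ∀ y ∈ closure U \ U, x ≠ y → Disjoint (f x) (f y)) := by
  classical
  haveI := cover_t1 hclosed hlots hcover
  set K := closure U \ U with hKdef
  suffices h : ∀ A : Finset X, ↑A ⊆ K → ∃ f : X → Set X,
      (∀ x ∈ A, GoodCut U x (f x) ∧ f x ⊆ D ∧ p ∉ f x ∧ f x ∩ K ⊆ {x}) ∧
      (∀ x ∈ A, ∀ y ∈ A, x ≠ y → Disjoint (f x) (f y)) by
    obtain ⟨f, h1, h2⟩ := h hKfin.toFinset (by simp)
    exact ⟨f, fun x hx => h1 x (hKfin.mem_toFinset.2 hx),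
      fun x hx y hy => h2 x (hKfin.mem_toFinset.2 hx) y (hKfin.mem_toFinset.2 hy)⟩
  intro A
  induction A using Finset.induction_on with
  | empty =>
    intro _
    exact ⟨fun _ => ∅, fun x hx => absurd hx (Finset.notMem_empty x), fun x hx => absurd hx
      (Finset.notMem_empty x)⟩
  | @insert a A ha IH =>
    intro hsub
    have haK : a ∈ K := hsub (Finset.mem_insert_self a A)
    obtain ⟨f, hf1, hf2⟩ := IH (fun y hy => hsub (Finset.mem_insert_of_mem hy))
    have hUn_closed : IsClosed (⋃ y ∈ A, f y) :=
      A.finite_toSet.isClosed_biUnion fun y hy => ((hf1 y hy).1).1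
    have hKa_closed : IsClosed (K \ {a}) := (hKfin.subset diff_subset).isClosed
    set G : Set X := D ∩ (⋃ y ∈ A, f y)ᶜ ∩ {p}ᶜ ∩ (K \ {a})ᶜ with hGdef
    have hGopen : IsOpen G :=
      (((hDopen.inter hUn_closed.isOpen_compl).inter isClosed_singleton.isOpen_compl).inter
        hKa_closed.isOpen_compl)
    have haG : a ∈ G := by
      refine ⟨⟨⟨hbd haK, ?_⟩, ?_⟩, ?_⟩
      · intro hc
        obtain ⟨y, hy⟩ := mem_iUnion.1 hc
        obtain ⟨hyA, hafy⟩ := by simpa using hy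
        have := (hf1 y hyA).2.2.2 ⟨hafy, haK⟩
        have hay : a = y := this
        exact ha (hay ▸ hyA)
      · intro hc
        rw [mem_singleton_iff] at hc
        exact haK.2 (hc ▸ hpU)
      · intro hc
        exact hc.2 rfl
    have hGK : G ∩ K ⊆ {a} := by
      rintro z ⟨hzG, hzK⟩
      by_contra hz
      exact hzG.2 ⟨hzK, hz⟩
    obtain ⟨C, hC, hCG⟩ := exists_goodCut hclosed hconn hlots hcover hUopen haK.1 haK.2
      (hKLO haK) hGopen haG hGK
    refine ⟨Function.update f a C, ?_, ?_⟩
    · intro x hx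
      rcases Finset.mem_insert.1 hx with rfl | hxA
      · rw [Function.update_self]
        exact ⟨hC, fun z hz => (hCG hz).1.1.1, fun hc => (hCG hc).1.2 rfl,
          fun z hz => hGK ⟨hCG hz.1, hz.2⟩⟩
      · rw [Function.update_of_ne (by rintro rfl; exact ha hxA) _ _]
        exact hf1 x hxA
    · intro x hx y hy hxy
      rcases Finset.mem_insert.1 hx with rfl | hxA <;> rcases Finset.mem_insert.1 hy with rfl | hyA
      · exact absurd rfl hxy
      · rw [Function.update_self, Function.update_of_ne (by rintro rfl; exact ha hyA) _ _]
        rw [Set.disjoint_left]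
        intro z hz hz2
        exact (hCG hz).1.1.2 (mem_biUnion hyA hz2)
      · rw [Function.update_self, Function.update_of_ne (by rintro rfl; exact ha hxA) _ _]
        rw [Set.disjoint_right]
        intro z hz hz2
        exact (hCG hz).1.1.2 (mem_biUnion hxA hz2)
      · rw [Function.update_of_ne (by rintro rfl; exact ha hxA) _ _,
          Function.update_of_ne (by rintro rfl; exact ha hyA) _ _]
        exact hf2 x hxA y hyA hxy

end Assemble


theorem stmt_4 {X : Type u} [TopologicalSpace X] (n : ℕ) (L : Fin n → Set X)
    (hclosed : ∀ i, IsClosed (L i)) (hcomp : ∀ i, IsCompact (L i))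
    (hconn : ∀ i, IsConnected (L i)) (hlots : ∀ i, IsLOTS ↥(L i))
    (hcover : ⋃ i, L i = Set.univ)
    (p : X) (U : Set X) (hU : Orderly U) (hpU : p ∈ U)
    (D : Set X) (hDopen : IsOpen D) (hD : Dense D)
    (hbd : closure U \ U ⊆ D) :
    ∃ V : Set X, Orderly V ∧ p ∈ V ∧ closure V ⊆ U ∧ U \ V ⊆ D := by
  classical
  obtain ⟨hUopen, hUcan, hUconn, hKfin, hKLO⟩ := hU
  set K := closure U \ U with hKdef
  obtain ⟨f, hf, hfd⟩ :=
    exists_cut_family hclosed hconn hlots hcover hUopen hKfin hKLO hDopen hbd hpU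
  set CC := ⋃ x ∈ K, f x with hCCdef
  have hCCc : IsClosed CC := hKfin.isClosed_biUnion fun x hx => (hf x hx).1.1
  set V := U \ CC with hVdef
  have hVopen : IsOpen V := hUopen.sdiff hCCc
  have hVU : V ⊆ U := diff_subset
  have hpV : p ∈ V := by
    refine ⟨hpU, ?_⟩
    intro hc
    obtain ⟨x, hx, hp⟩ := mem_iUnion₂.1 hc
    exact (hf x hx).2.2.1 hp
  have hclVU : closure V ⊆ U := by
    intro z hz
    have hz1 : z ∈ closure U := closure_mono diff_subset hz
    by_cases hzU : z ∈ U
    · exact hzU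
    · exfalso
      have hzK : z ∈ K := ⟨hz1, hzU⟩
      have hzint : z ∈ interior (f z) := (hf z hzK).1.2.1
      obtain ⟨y, hy1, hy2⟩ := mem_closure_iff.1 hz _ isOpen_interior hzint
      exact hy2.2 (mem_biUnion hzK (interior_subset hy1))
  have hnotclV : ∀ z : X, (∃ x ∈ K, z ∈ interior (f x)) → z ∉ closure V := by
    rintro z ⟨x, hx, hzint⟩ hc
    obtain ⟨y, hy1, hy2⟩ := mem_closure_iff.1 hc _ isOpen_interior hzint
    exact hy2.2 (mem_biUnion hx (interior_subset hy1))
  have hfr : closure V \ V ⊆ ⋃ x ∈ K, (f x \ interior (f x)) := by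
    intro z hz
    have hzU : z ∈ U := hclVU hz.1
    have hzCC : z ∈ CC := by
      by_contra hc
      exact hz.2 ⟨hzU, hc⟩
    obtain ⟨x, hx, hzf⟩ := mem_iUnion₂.1 hzCC
    have hzint : z ∉ interior (f x) := fun hc => hnotclV z ⟨x, hx, hc⟩ hz.1
    exact mem_biUnion hx ⟨hzf, hzint⟩
  have hcan : V = interior (closure V) := by
    apply Subset.antisymm (interior_maximal subset_closure hVopen)
    intro z hz
    have hzcl : z ∈ closure V := interior_subset hz
    have hzU : z ∈ U := hclVU hzcl
    by_contra hzV
    have hzCC : z ∈ CC := by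
      by_contra hc
      exact hzV ⟨hzU, hc⟩
    obtain ⟨x, hx, hzf⟩ := mem_iUnion₂.1 hzCC
    have hzint : z ∉ interior (f x) := fun hc => hnotclV z ⟨x, hx, hc⟩ hzcl
    have hzclint : z ∈ closure (interior (f x)) := (hf x hx).1.2.2.2.2.1 ⟨hzf, hzint⟩
    obtain ⟨y, hy1, hy2⟩ := mem_closure_iff.1 hzclint _ isOpen_interior hz
    exact hnotclV y ⟨x, hx, hy2⟩ (interior_subset hy1)
  have hfrfin : (closure V \ V).Finite :=
    (hKfin.biUnion fun x hx => (hf x hx).1.2.2.1).subset hfr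
  have hfrLO : closure V \ V ⊆ LO X := by
    intro z hz
    obtain ⟨x, hx, hzz⟩ := mem_iUnion₂.1 (hfr hz)
    exact (hf x hx).1.2.2.2.1 hzz
  have hUVD : U \ V ⊆ D := by
    intro z hz
    have : z ∈ CC := by
      by_contra hc
      exact hz.2 ⟨hz.1, hc⟩
    obtain ⟨x, hx, hzf⟩ := mem_iUnion₂.1 this
    exact (hf x hx).2.1 hzf
  have hVpre : IsPreconnected V := by
    intro u v hu hv hsuv ⟨zu, hzu⟩ ⟨zv, hzv⟩
    by_contra hem
    rw [not_nonempty_iff_eq_empty] at hem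
    set A := V ∩ u with hAdef
    set B := V ∩ v with hBdef
    have hAopen : IsOpen A := hVopen.inter hu
    have hBopen : IsOpen B := hVopen.inter hv
    have hABdisj : A ∩ B = ∅ := by
      apply eq_empty_of_subset_empty
      rw [← hem]
      exact fun z hz => ⟨hz.1.1, hz.1.2, hz.2.2⟩
    have hVAB : V ⊆ A ∪ B := fun z hz =>
      (hsuv hz).elim (fun h => Or.inl ⟨hz, h⟩) fun h => Or.inr ⟨hz, h⟩
    have hTside : ∀ T : Set X, T ⊆ V → T.Nonempty → IsPreconnected T → T ⊆ A ∨ T ⊆ B := by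
      intro T hTV hTne hTpre
      by_cases hTu : (T ∩ u).Nonempty
      · by_cases hTv : (T ∩ v).Nonempty
        · obtain ⟨w, hw⟩ := hTpre u v hu hv (hTV.trans hsuv) hTu hTv
          exact absurd (show w ∈ V ∩ (u ∩ v) from ⟨hTV hw.1, hw.2⟩)
            (by rw [hem]; exact notMem_empty w)
        · exact Or.inl fun t ht =>
            ⟨hTV ht, ((hsuv (hTV ht))).resolve_right fun hv' => hTv ⟨t, ht, hv'⟩⟩
      · exact Or.inr fun t ht =>
          ⟨hTV ht, ((hsuv (hTV ht))).resolve_left fun hu' => hTu ⟨t, ht, hu'⟩⟩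
    -- per-point decompositions
    have key : ∀ x : X, ∃ gA gB OA OB : Set X, x ∈ K →
        (f x ∩ U ⊆ gA ∪ gB) ∧ (gA ∩ V ⊆ A) ∧ (gB ∩ V ⊆ B) ∧
        (closure gA ⊆ f x ∪ closure (gA ∩ V)) ∧ (closure gB ⊆ f x ∪ closure (gB ∩ V)) ∧
        (∀ y ∈ K, y ≠ x → Disjoint (closure gA) (f y)) ∧
        (∀ y ∈ K, y ≠ x → Disjoint (closure gB) (f y)) ∧
        Disjoint (closure gA) (gB \ V) ∧ Disjoint (gA \ V) (closure gB) ∧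
        (IsOpen OA ∧ gA \ V ⊆ OA ∧ OA ⊆ f x ∪ gA) ∧
        (IsOpen OB ∧ gB \ V ⊆ OB ∧ OB ⊆ f x ∪ gB) ∧
        (gA \ V ⊆ f x) ∧ (gB \ V ⊆ f x) := by
      intro x
      by_cases hx : x ∈ K
      swap
      · exact ⟨∅, ∅, ∅, ∅, fun hc => absurd hc hx⟩
      obtain ⟨hfc, hfint, hffin, hfLO, hfclb, P1, P2, hPU, hd12, hd21, hatt1, hatt2⟩ :=
        (hf x hx).1
      set Sx := ⋃ y ∈ K \ {x}, f y with hSxdef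
      have hSxcl : IsClosed Sx :=
        (hKfin.subset diff_subset).isClosed_biUnion fun y hy => (hf y hy.1).1.1
      have hSdisj : Disjoint Sx (f x) := by
        rw [Set.disjoint_left]
        intro z hz hzf
        obtain ⟨y, hy, hyf⟩ := mem_iUnion₂.1 hz
        exact (Set.disjoint_left.1 (hfd y hy.1 x hx hy.2)) hyf hzf
      have hSxf : ∀ y ∈ K, y ≠ x → f y ⊆ Sx := fun y hy hyx =>
        subset_biUnion_of_mem (u := f) ⟨hy, hyx⟩
      have piece : ∀ P : Set X, P ⊆ f x ∩ U → Attach U (f x) P →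
          ∃ qa qb Oa Ob : Set X,
            P ⊆ qa ∪ qb ∧ (qa ∩ V ⊆ A) ∧ (qb ∩ V ⊆ B) ∧
            (closure qa ⊆ f x ∪ closure (qa ∩ V)) ∧
            (closure qb ⊆ f x ∪ closure (qb ∩ V)) ∧
            (∀ y ∈ K, y ≠ x → Disjoint (closure qa) (f y)) ∧
            (∀ y ∈ K, y ≠ x → Disjoint (closure qb) (f y)) ∧
            (IsOpen Oa ∧ qa \ V ⊆ Oa ∧ Oa ⊆ f x ∪ qa) ∧
            (IsOpen Ob ∧ qb \ V ⊆ Ob ∧ Ob ⊆ f x ∪ qb) ∧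
            (qa \ V ⊆ P) ∧ (qb \ V ⊆ P) ∧
            (closure qa ∩ f x ⊆ closure P) ∧ (closure qb ∩ f x ⊆ closure P) ∧
            (qa = ∅ ∨ qb = ∅) := by
        intro P hPsub hatt
        by_cases hPne : P.Nonempty
        swap
        · rw [not_nonempty_iff_eq_empty] at hPne
          subst hPne
          refine ⟨∅, ∅, ∅, ∅, ?_⟩
          simp [closure_empty]
        obtain ⟨T, O, hOopen, hPO, hOCT, hTne, hTC, hclTU, hclTC, hclTS, hTpre, hPTpre⟩ :=
          hatt Sx hSxcl hSdisj hPne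
        have hTV : T ⊆ V := by
          intro t ht
          refine ⟨hclTU (subset_closure ht), ?_⟩
          intro hc
          obtain ⟨y, hy, hyf⟩ := mem_iUnion₂.1 hc
          by_cases hyx : y = x
          · exact (Set.disjoint_left.1 hTC) ht (by rw [← hyx]; exact hyf)
          · exact (Set.disjoint_left.1 hclTS) (subset_closure ht) (hSxf y hy hyx hyf)
        have hPV : P ∩ V = ∅ := by
          apply eq_empty_of_subset_empty
          rintro z ⟨hz1, hz2⟩
          exact absurd (mem_biUnion hx (hPsub hz1).1) hz2.2
        have hclP : closure P ⊆ f x := closure_minimal (fun z hz => (hPsub hz).1) hfc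
        have hQV : (P ∪ T) ∩ V = T := by
          rw [union_inter_distrib_right, hPV, empty_union, inter_eq_left]
          exact hTV
        have hQdV : (P ∪ T) \ V ⊆ P := by
          rintro z ⟨hz1 | hz1, hz2⟩
          · exact hz1
          · exact absurd (hTV hz1) hz2
        have hclQ : closure (P ∪ T) ⊆ f x ∪ closure ((P ∪ T) ∩ V) := by
          rw [closure_union, hQV]
          exact union_subset_union_left _ hclP
        have hdisjy : ∀ y ∈ K, y ≠ x → Disjoint (closure (P ∪ T)) (f y) := by
          intro y hy hyx
          rw [closure_union, Set.disjoint_left]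
          rintro z (hz | hz) hzf
          · exact (Set.disjoint_left.1 (hfd x hx y hy (Ne.symm hyx))) (hclP hz) hzf
          · exact (Set.disjoint_left.1 hclTS) hz (hSxf y hy hyx hzf)
        have hOQ : O ⊆ f x ∪ (P ∪ T) :=
          hOCT.trans (union_subset_union_right _ subset_union_right)
        have hQO : (P ∪ T) \ V ⊆ O := fun z hz => hPO (hQdV hz)
        have hclQf : closure (P ∪ T) ∩ f x ⊆ closure P := by
          rw [closure_union]
          rintro z ⟨hz1 | hz1, hz2⟩
          · exact hz1
          · exact subset_closure (hclTC ⟨hz1, hz2⟩)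
        rcases hTside T hTV hTne hTpre with hTA | hTB
        · refine ⟨P ∪ T, ∅, O, ∅, subset_union_left.trans subset_union_left, ?_, by simp, ?_, by simp [closure_empty],
            hdisjy, fun y _ _ => by simp [closure_empty], ⟨hOopen, hQO, hOQ⟩,
            ⟨isOpen_empty, by simp, by simp⟩, hQdV, by simp, hclQf,
            by simp [closure_empty], Or.inr rfl⟩
          · rw [hQV]; exact hTA
          · exact hclQ
        · refine ⟨∅, P ∪ T, ∅, O, subset_union_left.trans subset_union_right, by simp, ?_, by simp [closure_empty],
            ?_, fun y _ _ => by simp [closure_empty], hdisjy,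
            ⟨isOpen_empty, by simp, by simp⟩, ⟨hOopen, hQO, hOQ⟩, by simp, hQdV,
            by simp [closure_empty], hclQf, Or.inl rfl⟩
          · rw [hQV]; exact hTB
          · exact hclQ
      obtain ⟨qa1, qb1, Oa1, Ob1, j1, j2, j3, j4, j5, j6, j7, j8, j9, j10, j11, j12, j13, j14⟩ :=
        piece P1 (by rw [hPU]; exact subset_union_left) hatt1
      obtain ⟨qa2, qb2, Oa2, Ob2, m1, m2, m3, m4, m5, m6, m7, m8, m9, m10, m11, m12, m13, m14⟩ :=
        piece P2 (by rw [hPU]; exact subset_union_right) hatt2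
      have hP1f : P1 ⊆ f x := fun w hw => (show w ∈ f x ∩ U by rw [hPU]; exact Or.inl hw).1
      have hP2f : P2 ⊆ f x := fun w hw => (show w ∈ f x ∩ U by rw [hPU]; exact Or.inr hw).1
      refine ⟨qa1 ∪ qa2, qb1 ∪ qb2, Oa1 ∪ Oa2, Ob1 ∪ Ob2, fun _ => ?_⟩
      refine ⟨?_, ?_, ?_, ?_, ?_, ?_, ?_, ?_, ?_, ?_, ?_, ?_, ?_⟩
      · rw [hPU]
        rintro z (hz | hz)
        · rcases j1 hz with h | h
          · exact Or.inl (Or.inl h)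
          · exact Or.inr (Or.inl h)
        · rcases m1 hz with h | h
          · exact Or.inl (Or.inr h)
          · exact Or.inr (Or.inr h)
      · rintro z ⟨hz1 | hz1, hz2⟩
        · exact j2 ⟨hz1, hz2⟩
        · exact m2 ⟨hz1, hz2⟩
      · rintro z ⟨hz1 | hz1, hz2⟩
        · exact j3 ⟨hz1, hz2⟩
        · exact m3 ⟨hz1, hz2⟩
      · rw [closure_union]
        rintro z (hz | hz)
        · rcases j4 hz with h | h
          · exact Or.inl h
          · exact Or.inr (closure_mono (inter_subset_inter_left _ subset_union_left) h)
        · rcases m4 hz with h | h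
          · exact Or.inl h
          · exact Or.inr (closure_mono (inter_subset_inter_left _ subset_union_right) h)
      · rw [closure_union]
        rintro z (hz | hz)
        · rcases j5 hz with h | h
          · exact Or.inl h
          · exact Or.inr (closure_mono (inter_subset_inter_left _ subset_union_left) h)
        · rcases m5 hz with h | h
          · exact Or.inl h
          · exact Or.inr (closure_mono (inter_subset_inter_left _ subset_union_right) h)
      · intro y hy hyx
        rw [closure_union]
        exact Disjoint.union_left (j6 y hy hyx) (m6 y hy hyx)
      · intro y hy hyx
        rw [closure_union]
        exact Disjoint.union_left (j7 y hy hyx) (m7 y hy hyx)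
      · rw [closure_union, Set.disjoint_left]
        rintro z (hz | hz) ⟨hz2 | hz2, hz3⟩
        · rcases j14 with h | h
          · rw [h] at hz; simp [closure_empty] at hz
          · rw [h] at hz2; simp at hz2
        · have hzf : z ∈ f x := hP2f (m11 ⟨hz2, hz3⟩)
          exact (Set.disjoint_left.1 hd12) (j12 ⟨hz, hzf⟩) (m11 ⟨hz2, hz3⟩)
        · have hzf : z ∈ f x := hP1f (j11 ⟨hz2, hz3⟩)
          exact (Set.disjoint_left.1 hd21) (j11 ⟨hz2, hz3⟩) (m12 ⟨hz, hzf⟩)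
        · rcases m14 with h | h
          · rw [h] at hz; simp [closure_empty] at hz
          · rw [h] at hz2; simp at hz2
      · rw [closure_union, Set.disjoint_left]
        rintro z ⟨hz2 | hz2, hz3⟩ (hz | hz)
        · rcases j14 with h | h
          · rw [h] at hz2; simp at hz2
          · rw [h] at hz; simp [closure_empty] at hz
        · have hzf : z ∈ f x := hP1f (j10 ⟨hz2, hz3⟩)
          exact (Set.disjoint_left.1 hd21) (j10 ⟨hz2, hz3⟩) (m13 ⟨hz, hzf⟩)
        · have hzf : z ∈ f x := hP2f (m10 ⟨hz2, hz3⟩)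
          exact (Set.disjoint_left.1 hd12) (j13 ⟨hz, hzf⟩) (m10 ⟨hz2, hz3⟩)
        · rcases m14 with h | h
          · rw [h] at hz2; simp at hz2
          · rw [h] at hz; simp [closure_empty] at hz
      · refine ⟨j8.1.union m8.1, ?_, ?_⟩
        · rintro z ⟨hz1 | hz1, hz2⟩
          · exact Or.inl (j8.2.1 ⟨hz1, hz2⟩)
          · exact Or.inr (m8.2.1 ⟨hz1, hz2⟩)
        · rintro z (hz | hz)
          · rcases j8.2.2 hz with h | h
            · exact Or.inl h
            · exact Or.inr (Or.inl h)
          · rcases m8.2.2 hz with h | h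
            · exact Or.inl h
            · exact Or.inr (Or.inr h)
      · refine ⟨j9.1.union m9.1, ?_, ?_⟩
        · rintro z ⟨hz1 | hz1, hz2⟩
          · exact Or.inl (j9.2.1 ⟨hz1, hz2⟩)
          · exact Or.inr (m9.2.1 ⟨hz1, hz2⟩)
        · rintro z (hz | hz)
          · rcases j9.2.2 hz with h | h
            · exact Or.inl h
            · exact Or.inr (Or.inl h)
          · rcases m9.2.2 hz with h | h
            · exact Or.inl h
            · exact Or.inr (Or.inr h)
      · rintro z ⟨hz1 | hz1, hz2⟩
        · exact hP1f (j10 ⟨hz1, hz2⟩)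
        · exact hP2f (m10 ⟨hz1, hz2⟩)
      · rintro z ⟨hz1 | hz1, hz2⟩
        · exact hP1f (j11 ⟨hz1, hz2⟩)
        · exact hP2f (m11 ⟨hz1, hz2⟩)
    choose gA gB OA OB hkey using key
    have hclZB : closure (B ∪ ⋃ x ∈ K, gB x) = closure B ∪ ⋃ x ∈ K, closure (gB x) := by
      rw [closure_union, hKfin.closure_biUnion]
    have hclZA : closure (A ∪ ⋃ x ∈ K, gA x) = closure A ∪ ⋃ x ∈ K, closure (gA x) := by
      rw [closure_union, hKfin.closure_biUnion]
    have side : ∀ (A' B' : Set X) (gA' gB' OA' : X → Set X),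
        IsOpen A' → A' ⊆ V → B' ⊆ V → A' ∩ B' = ∅ →
        (∀ x ∈ K, gA' x ∩ V ⊆ A') → (∀ x ∈ K, gB' x ∩ V ⊆ B') →
        (∀ x ∈ K, closure (gB' x) ⊆ f x ∪ closure (gB' x ∩ V)) →
        (∀ x ∈ K, IsOpen (OA' x) ∧ gA' x \ V ⊆ OA' x ∧ OA' x ⊆ f x ∪ gA' x) →
        (∀ x ∈ K, gA' x \ V ⊆ f x) →
        (∀ x ∈ K, Disjoint (gA' x \ V) (closure (gB' x))) →
        ∀ z, z ∈ A' ∪ ⋃ x ∈ K, gA' x → z ∈ closure B' ∪ ⋃ x ∈ K, closure (gB' x) → False := by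
      intro A' B' gA' gB' OA' hA'o hA'V hB'V hA'B' hgA'V hgB'V hclgB' hOA' hgA'f hdAB z hzA hzB
      have hcase : z ∈ closure B' → False := by
        intro hzB'
        rcases hzA with hzA | hzA
        · have : z ∈ closure (A' ∩ B') := hA'o.inter_closure ⟨hzA, hzB'⟩
          rw [hA'B', closure_empty] at this
          exact this
        · obtain ⟨x, hx, hzg⟩ := mem_iUnion₂.1 hzA
          by_cases hzV : z ∈ V
          · have : z ∈ closure (A' ∩ B') := hA'o.inter_closure ⟨hgA'V x hx ⟨hzg, hzV⟩, hzB'⟩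
            rw [hA'B', closure_empty] at this
            exact this
          · have hOB' : OA' x ∩ B' = ∅ := by
              apply eq_empty_of_subset_empty
              rintro w ⟨hw1, hw2⟩
              rcases (hOA' x hx).2.2 hw1 with h | h
              · exact (hB'V hw2).2 (mem_biUnion hx h)
              · have : w ∈ A' ∩ B' := ⟨hgA'V x hx ⟨h, hB'V hw2⟩, hw2⟩
                rw [hA'B'] at this
                exact this
            have : z ∈ closure (OA' x ∩ B') :=
              (hOA' x hx).1.inter_closure ⟨(hOA' x hx).2.1 ⟨hzg, hzV⟩, hzB'⟩
            rw [hOB', closure_empty] at this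
            exact this
      rcases hzB with hzB | hzB
      · exact hcase hzB
      · obtain ⟨x', hx', hzg'⟩ := mem_iUnion₂.1 hzB
        rcases hclgB' x' hx' hzg' with hzf' | hzclb
        · rcases hzA with hzA | hzA
          · exact (hA'V hzA).2 (mem_biUnion hx' hzf')
          · obtain ⟨x, hx, hzg⟩ := mem_iUnion₂.1 hzA
            by_cases hzV : z ∈ V
            · exact (hA'V (hgA'V x hx ⟨hzg, hzV⟩)).2 (mem_biUnion hx' hzf')
            · by_cases hxx : x = x'
              · subst hxx
                exact (Set.disjoint_left.1 (hdAB x hx)) ⟨hzg, hzV⟩ hzg'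
              · exact (Set.disjoint_left.1 (hfd x hx x' hx' hxx)) (hgA'f x hx ⟨hzg, hzV⟩) hzf'
        · exact hcase (closure_mono (hgB'V x' hx') hzclb)
    obtain ⟨w, hwU, hw2⟩ := isPreconnected_closed_iff.1 hUconn.isPreconnected
      (closure (A ∪ ⋃ x ∈ K, gA x)) (closure (B ∪ ⋃ x ∈ K, gB x))
      isClosed_closure isClosed_closure
      (by
        intro z hz
        by_cases hzV : z ∈ V
        · rcases hVAB hzV with h | h
          · exact Or.inl (subset_closure (Or.inl h))
          · exact Or.inr (subset_closure (Or.inl h))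
        · have hzCC : z ∈ CC := by
            by_contra hc
            exact hzV ⟨hz, hc⟩
          obtain ⟨x, hx, hzf⟩ := mem_iUnion₂.1 hzCC
          rcases (hkey x hx).1 ⟨hzf, hz⟩ with h | h
          · exact Or.inl (subset_closure (Or.inr (mem_biUnion hx h)))
          · exact Or.inr (subset_closure (Or.inr (mem_biUnion hx h))))
      ⟨zu, hVU hzu.1, subset_closure (Or.inl hzu)⟩
      ⟨zv, hVU hzv.1, subset_closure (Or.inl hzv)⟩
    have hwA := hw2.1
    have hwB := hw2.2
    rw [hclZA] at hwA
    rw [hclZB] at hwB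
    have hwZ : w ∈ (A ∪ ⋃ x ∈ K, gA x) ∪ (B ∪ ⋃ x ∈ K, gB x) := by
      by_cases hzV : w ∈ V
      · rcases hVAB hzV with h | h
        · exact Or.inl (Or.inl h)
        · exact Or.inr (Or.inl h)
      · have hzCC : w ∈ CC := by
          by_contra hc
          exact hzV ⟨hwU, hc⟩
        obtain ⟨x, hx, hzf⟩ := mem_iUnion₂.1 hzCC
        rcases (hkey x hx).1 ⟨hzf, hwU⟩ with h | h
        · exact Or.inl (Or.inr (mem_biUnion hx h))
        · exact Or.inr (Or.inr (mem_biUnion hx h))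
    rcases hwZ with hwZ | hwZ
    · exact side A B gA gB OA hAopen inter_subset_left inter_subset_left hABdisj
        (fun x hx => (hkey x hx).2.1) (fun x hx => (hkey x hx).2.2.1)
        (fun x hx => (hkey x hx).2.2.2.2.1)
        (fun x hx => (hkey x hx).2.2.2.2.2.2.2.2.2.1)
        (fun x hx => (hkey x hx).2.2.2.2.2.2.2.2.2.2.2.1)
        (fun x hx => (hkey x hx).2.2.2.2.2.2.2.2.1)
        w hwZ (by rw [← hclZB]; exact hw2.2)
    · exact side B A gB gA OB hBopen inter_subset_left inter_subset_left
        (by rw [inter_comm]; exact hABdisj)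
        (fun x hx => (hkey x hx).2.2.1) (fun x hx => (hkey x hx).2.1)
        (fun x hx => (hkey x hx).2.2.2.1)
        (fun x hx => (hkey x hx).2.2.2.2.2.2.2.2.2.2.1)
        (fun x hx => (hkey x hx).2.2.2.2.2.2.2.2.2.2.2.2)
        (fun x hx => ((hkey x hx).2.2.2.2.2.2.2.1).symm)
        w hwZ (by rw [← hclZA]; exact hw2.1)
  exact ⟨V, ⟨hVopen, hcan, ⟨⟨p, hpV⟩, hVpre⟩, hfrfin, hfrLO⟩, hpV, hclVU, hUVD⟩
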